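/- Let Φ be a unital positive linear map from B(H) to B(K), let A_1,...,A_n be positive operators with 0 < m·I_H ≤ A_j ≤ M·I_H, and let ω_1,...,ω_n ∈ [0,1] with ∑_j ω_j = 1. Then log((1/e)·(M^m/m^M)^{1/(M-m)}·L(m,M))·I_K + Φ(∑_{j=1}^n ω_j log A_j) ≥ log(∑_{j=1}^n ω_j Φ(A_j)), where L(a,b) = (b-a)/(log b − log a) for a ≠ b and L(a,a) = a is the logarithmic mean. -/

import Mathlib

section aux
variable {𝒜 : Type*} [CStarAlgebra 𝒜] [PartialOrder 𝒜] [StarOrderedRing 𝒜]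

/-- cfc of an affine function. -/
lemma cfc_affine (α β : ℝ) (a : 𝒜) (ha : IsSelfAdjoint a) :
    cfc (fun t : ℝ => α * t + β) a = α • a + β • (1 : 𝒜) := by
  rw [cfc_add (a := a) (fun t => α * t) (fun _ => β) (by fun_prop) (by fun_prop),
    cfc_const_mul_id α a ha, cfc_const β a ha, Algebra.algebraMap_eq_smul_one]

lemma spectrum_mem_Icc {m M : ℝ} (a : 𝒜) (ha : IsSelfAdjoint a)
    (h1 : m • (1 : 𝒜) ≤ a) (h2 : a ≤ M • (1 : 𝒜)) :
    ∀ t ∈ spectrum ℝ a, t ∈ Set.Icc m M := by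
  rw [← Algebra.algebraMap_eq_smul_one] at h1 h2
  intro t ht
  exact ⟨(algebraMap_le_iff_le_spectrum (a := a) ha).mp h1 t ht,
    (le_algebraMap_iff_spectrum_le (a := a) ha).mp h2 t ht⟩

end aux

/-- A reverse operator inequality for the logarithm:
`log(∑ ω_j Φ(A_j)) ≤ log((1/e)·(M^m/m^M)^{1/(M-m)}·L(m,M))•1 + Φ(∑ ω_j log A_j)`. -/
theorem reverse_log_operator
    {𝒜 ℬ : Type*} [CStarAlgebra 𝒜] [PartialOrder 𝒜] [StarOrderedRing 𝒜]
    [CStarAlgebra ℬ] [PartialOrder ℬ] [StarOrderedRing ℬ]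
    (n : ℕ) (m M : ℝ) (hm : 0 < m) (hmM : m < M)
    (Φ : 𝒜 →ₗ[ℂ] ℬ) (hΦ1 : Φ 1 = 1) (hΦpos : ∀ a : 𝒜, 0 ≤ a → 0 ≤ Φ a)
    (A : Fin n → 𝒜) (hA : ∀ j, IsSelfAdjoint (A j))
    (hAm : ∀ j, m • (1 : 𝒜) ≤ A j) (hAM : ∀ j, A j ≤ M • (1 : 𝒜))
    (ω : Fin n → ℝ) (hω0 : ∀ j, 0 ≤ ω j) (hω1 : ∀ j, ω j ≤ 1) (hωsum : ∑ j, ω j = 1) :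
    cfc Real.log (∑ j, ω j • Φ (A j)) ≤
      (Real.log ((Real.exp 1)⁻¹ * (M ^ m / m ^ M) ^ (1 / (M - m)) *
          ((M - m) / (Real.log M - Real.log m)))) • (1 : ℬ) +
        Φ (∑ j, ω j • cfc Real.log (A j)) := by
  have hM : 0 < M := lt_trans hm hmM
  have hMm : (0:ℝ) < M - m := by linarith
  have hlogMm : 0 < Real.log M - Real.log m := sub_pos.2 (Real.log_lt_log hm hmM)
  set α := (Real.log M - Real.log m) / (M - m) with hαdef
  set β := (M * Real.log m - m * Real.log M) / (M - m) with hβdef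
  have hα0 : 0 < α := div_pos hlogMm hMm
  set C := -1 - β - Real.log α with hCdef
  -- the constant identity
  have hCeq : Real.log ((Real.exp 1)⁻¹ * (M ^ m / m ^ M) ^ (1 / (M - m)) *
      ((M - m) / (Real.log M - Real.log m))) = C := by
    have hP : (0:ℝ) < M ^ m / m ^ M := by positivity
    rw [Real.log_mul (by positivity) (by positivity),
      Real.log_mul (by positivity) (by positivity),
      Real.log_inv, Real.log_exp, Real.log_rpow hP,
      Real.log_div (by positivity) (by positivity),
      Real.log_rpow hM, Real.log_rpow hm,
      Real.log_div (ne_of_gt hMm) (ne_of_gt hlogMm), hCdef, hβdef, hαdef,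
      Real.log_div (ne_of_gt hlogMm) (ne_of_gt hMm)]
    field_simp
    ring
  rw [hCeq]
  -- monotonicity of Φ
  have hΦmono : ∀ a b : 𝒜, a ≤ b → Φ a ≤ Φ b := fun a b h => by
    have := hΦpos (b - a) (sub_nonneg.2 h)
    rw [map_sub] at this
    exact sub_nonneg.mp this
  have hΦsmul : ∀ (r : ℝ) (a : 𝒜), Φ (r • a) = r • Φ a := fun r a =>
    Φ.map_smul_of_tower r a
  -- Φ of m•1 and M•1
  have hΦm1 : Φ (m • (1:𝒜)) = m • (1:ℬ) := by rw [hΦsmul, hΦ1]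
  have hΦM1 : Φ (M • (1:𝒜)) = M • (1:ℬ) := by rw [hΦsmul, hΦ1]
  set X := ∑ j, ω j • Φ (A j) with hXdef
  -- bounds on X
  have hXm : m • (1:ℬ) ≤ X := by
    calc m • (1:ℬ) = ∑ j, ω j • (m • (1:ℬ)) := by
          rw [← Finset.sum_smul, hωsum, one_smul]
      _ ≤ X := Finset.sum_le_sum fun j _ => smul_le_smul_of_nonneg_left
          (hΦm1 ▸ hΦmono _ _ (hAm j)) (hω0 j)
  have hXM : X ≤ M • (1:ℬ) := by
    calc X ≤ ∑ j, ω j • (M • (1:ℬ)) := Finset.sum_le_sum fun j _ =>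
          smul_le_smul_of_nonneg_left (hΦM1 ▸ hΦmono _ _ (hAM j)) (hω0 j)
      _ = M • (1:ℬ) := by rw [← Finset.sum_smul, hωsum, one_smul]
  have hX0 : (0:ℬ) ≤ X := le_trans (smul_nonneg hm.le zero_le_one) hXm
  have hXsa : IsSelfAdjoint X := hX0.isSelfAdjoint
  have hXspec := spectrum_mem_Icc X hXsa hXm hXM
  -- Step 1 : cfc log X ≤ C • 1 + (α • X + β • 1)
  have step1 : cfc Real.log X ≤ C • (1:ℬ) + (α • X + β • (1:ℬ)) := by
    have hcont : ContinuousOn Real.log (spectrum ℝ X) :=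
      Real.continuousOn_log.mono fun t ht => by
        have := (hXspec t ht).1; simp; linarith
    calc cfc Real.log X ≤ cfc (fun t : ℝ => C + (α * t + β)) X := by
          apply cfc_mono ?_ hcont (by fun_prop)
          intro t ht
          have htm : m ≤ t := (hXspec t ht).1
          have ht0 : 0 < t := lt_of_lt_of_le hm htm
          have h1 : Real.log (α * t) ≤ α * t - 1 :=
            Real.log_le_sub_one_of_pos (by positivity)
          rw [Real.log_mul (ne_of_gt hα0) (ne_of_gt ht0)] at h1
          rw [hCdef]; linarith
      _ = C • (1:ℬ) + (α • X + β • (1:ℬ)) := by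
          rw [cfc_const_add C (fun t => α * t + β) X (by fun_prop) hXsa,
            cfc_affine α β X hXsa, Algebra.algebraMap_eq_smul_one]
  -- Step 2 : α • X + β • 1 ≤ Φ (∑ ω_j log A_j)
  have step2 : α • X + β • (1:ℬ) ≤ Φ (∑ j, ω j • cfc Real.log (A j)) := by
    have hj : ∀ j, α • Φ (A j) + β • (1:ℬ) ≤ Φ (cfc Real.log (A j)) := by
      intro j
      have hspecj := spectrum_mem_Icc (A j) (hA j) (hAm j) (hAM j)
      have hcontj : ContinuousOn Real.log (spectrum ℝ (A j)) :=
        Real.continuousOn_log.mono fun t ht => by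
          have := (hspecj t ht).1; simp; linarith
      have hle : α • (A j) + β • (1:𝒜) ≤ cfc Real.log (A j) := by
        rw [← cfc_affine α β (A j) (hA j)]
        apply cfc_mono ?_ (by fun_prop) hcontj
        intro t ht
        obtain ⟨htm, htM⟩ := hspecj t ht
        -- chord below log on [m, M]
        have ha' : (0:ℝ) ≤ (M - t)/(M - m) := div_nonneg (by linarith) (by linarith)
        have hb' : (0:ℝ) ≤ (t - m)/(M - m) := div_nonneg (by linarith) (by linarith)
        have hab : (M - t)/(M - m) + (t - m)/(M - m) = 1 := by field_simp; ring
        have hcc := (strictConcaveOn_log_Ioi.concaveOn).2 (Set.mem_Ioi.2 hm)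
          (Set.mem_Ioi.2 hM) ha' hb' hab
        have hx : ((M - t)/(M - m)) • m + ((t - m)/(M - m)) • M = t := by
          simp only [smul_eq_mul]; field_simp; ring
        rw [hx] at hcc
        have heq : ((M - t)/(M - m)) • Real.log m + ((t - m)/(M - m)) • Real.log M
            = α * t + β := by
          simp only [smul_eq_mul, hαdef, hβdef]; field_simp; ring
        linarith [heq ▸ hcc]
      calc α • Φ (A j) + β • (1:ℬ) = Φ (α • A j + β • (1:𝒜)) := by
            rw [map_add, hΦsmul, hΦsmul, hΦ1]
        _ ≤ Φ (cfc Real.log (A j)) := hΦmono _ _ hle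
    calc α • X + β • (1:ℬ)
        = ∑ j, ω j • (α • Φ (A j) + β • (1:ℬ)) := by
          simp only [smul_add, Finset.sum_add_distrib, ← Finset.sum_smul, hωsum, one_smul,
            hXdef, Finset.smul_sum, smul_comm α]
      _ ≤ ∑ j, ω j • Φ (cfc Real.log (A j)) := Finset.sum_le_sum fun j _ =>
          smul_le_smul_of_nonneg_left (hj j) (hω0 j)
      _ = Φ (∑ j, ω j • cfc Real.log (A j)) := by
          rw [map_sum]; exact Finset.sum_congr rfl fun j _ => (hΦsmul _ _).symm
  calc cfc Real.log X ≤ C • (1:ℬ) + (α • X + β • (1:ℬ)) := step1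
    _ ≤ C • (1:ℬ) + Φ (∑ j, ω j • cfc Real.log (A j)) := by
        exact add_le_add le_rfl step2
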